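/- Let 0 < γ_k < 1/4 for all k, define δ_s = γ_1 γ_2 ⋯ γ_s, r_0 = 1, r_s = γ_s r_{s-1}^2. Suppose additionally γ_k ≤ 1/32 for all k and ∑ γ_k < ∞, and set C_0 = exp(16 ∑_{k=1}^∞ γ_k). Then for the Lebesgue function of interpolation on the Julia-type Cantor set K(γ) at the 2^s endpoints Y_{s-1}, assuming |l_m(x)| ≤ C_0 δ_s / h_{k_{i+1}, s-i-1} for each of the 2^i nodes x_m in the adjacent block J_{k_i,s-i} and |l_1(x)| ≤ 1, and the gap bounds h_{j,k} ≥ (7/8) δ_k, one concludes λ_{2^s}(x) ≤ 1 + (8/7) C_0 ∑_{i=1}^s 2^{i-1} γ_s γ_{s-1} ⋯ γ_{s-i+1} < 1 + 4C_0/105. -/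

import Mathlib

/-- Abstract form of the Lebesgue-function bound for the Julia-type Cantor set `K(γ)`:
`h i` denotes the gap `h_{k_{i+1}, s-i-1}` associated with the adjacent block
`J_{k_i, s-i}` of `2^{i-1}` nodes, and `lam` is the Lebesgue function value,
already bounded via `|l_1(x)| ≤ 1` and `|l_m(x)| ≤ C₀ δ_s / h i`. -/
theorem stmt_16 (γ : ℕ → ℝ) (hγ0 : γ 0 = 0)
    (hγpos : ∀ k : ℕ, 1 ≤ k → 0 < γ k)
    (hγ4 : ∀ k : ℕ, 1 ≤ k → γ k < 1/4)
    (hγ32 : ∀ k : ℕ, 1 ≤ k → γ k ≤ 1/32)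
    (hsum : Summable γ)
    (C0 : ℝ) (hC0 : C0 = Real.exp (16 * ∑' k, γ k))
    (δ : ℕ → ℝ) (hδ : ∀ s : ℕ, δ s = ∏ k ∈ Finset.Icc 1 s, γ k)
    (s : ℕ) (lam : ℝ) (h : ℕ → ℝ)
    (hgap : ∀ i ∈ Finset.Icc 1 s, (7/8) * δ (s - i) ≤ h i)
    (hpos : ∀ i ∈ Finset.Icc 1 s, 0 < h i)
    (hlam : lam ≤ 1 + ∑ i ∈ Finset.Icc 1 s, 2 ^ (i - 1) * (C0 * δ s / h i)) :
    lam ≤ 1 + (8/7) * C0 *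
        ∑ i ∈ Finset.Icc 1 s, 2 ^ (i - 1) * ∏ t ∈ Finset.range i, γ (s - t) ∧
      lam < 1 + 4 * C0 / 105 := by
  have hC0pos : 0 < C0 := by rw [hC0]; exact Real.exp_pos _
  have hδpos : ∀ n, 0 < δ n := by
    intro n
    rw [hδ]
    exact Finset.prod_pos fun k hk => hγpos k (Finset.mem_Icc.mp hk).1
  set P : ℕ → ℝ := fun i => ∏ t ∈ Finset.range i, γ (s - t) with hP
  -- splitting of δ s
  have hsplit : ∀ i, i ≤ s → δ s = δ (s - i) * P i := by
    intro i hi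
    induction i with
    | zero => simp [hP]
    | succ n ih =>
      have hn : n ≤ s := Nat.le_of_succ_le hi
      have hstep : δ (s - n) = δ (s - (n + 1)) * γ (s - n) := by
        have hsn : s - n = (s - (n + 1)) + 1 := by omega
        rw [hδ, hδ, hsn, Finset.prod_Icc_succ_top (by omega)]
      have hPn : P (n + 1) = P n * γ (s - n) := by
        simp [hP, Finset.prod_range_succ]
      rw [ih hn, hstep, hPn]; ring
  have hPpos : ∀ i ∈ Finset.Icc 1 s, 0 < P i := by
    intro i hi
    obtain ⟨hi1, his⟩ := Finset.mem_Icc.mp hi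
    exact Finset.prod_pos fun t ht => hγpos _ (by
      have := Finset.mem_range.mp ht; omega)
  have hkey : ∀ i ∈ Finset.Icc 1 s, C0 * δ s / h i ≤ 8/7 * C0 * P i := by
    intro i hi
    obtain ⟨hi1, his⟩ := Finset.mem_Icc.mp hi
    have hd : 0 < δ (s - i) := hδpos (s - i)
    have hg := hgap i hi
    have hden : (0:ℝ) < 7/8 * δ (s - i) := by linarith
    calc C0 * δ s / h i ≤ C0 * δ s / (7/8 * δ (s - i)) := by
          exact div_le_div_of_nonneg_left
            (le_of_lt (mul_pos hC0pos (hδpos s))) hden hg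
      _ = 8/7 * C0 * P i := by
          rw [hsplit i his]; field_simp
  have hS1 : lam ≤ 1 + 8/7 * C0 * ∑ i ∈ Finset.Icc 1 s, 2 ^ (i - 1) * P i := by
    refine hlam.trans ?_
    have hsum_le : ∑ i ∈ Finset.Icc 1 s, (2:ℝ) ^ (i - 1) * (C0 * δ s / h i)
        ≤ ∑ i ∈ Finset.Icc 1 s, (2:ℝ) ^ (i - 1) * (8/7 * C0 * P i) :=
      Finset.sum_le_sum fun i hi =>
        mul_le_mul_of_nonneg_left (hkey i hi) (by positivity)
    have heq : ∑ i ∈ Finset.Icc 1 s, (2:ℝ) ^ (i - 1) * (8/7 * C0 * P i)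
        = 8/7 * C0 * ∑ i ∈ Finset.Icc 1 s, (2:ℝ) ^ (i - 1) * P i := by
      rw [Finset.mul_sum]
      exact Finset.sum_congr rfl fun i _ => by ring
    linarith [heq ▸ hsum_le]
  -- bound the sum by 1/30
  have hSbound : ∑ i ∈ Finset.Icc 1 s, (2:ℝ) ^ (i - 1) * P i < 1/30 := by
    have h1 : ∑ i ∈ Finset.Icc 1 s, (2:ℝ) ^ (i - 1) * P i
        ≤ ∑ i ∈ Finset.Icc 1 s, (1/2) * ((1:ℝ)/16) ^ i := by
      apply Finset.sum_le_sum
      intro i hi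
      obtain ⟨hi1, his⟩ := Finset.mem_Icc.mp hi
      have hPle : P i ≤ (1/32) ^ i := by
        calc P i ≤ ∏ t ∈ Finset.range i, (1/32 : ℝ) := by
              apply Finset.prod_le_prod
              · intro t ht
                exact le_of_lt (hγpos _ (by have := Finset.mem_range.mp ht; omega))
              · intro t ht
                exact hγ32 _ (by have := Finset.mem_range.mp ht; omega)
          _ = (1/32 : ℝ) ^ i := by rw [Finset.prod_const, Finset.card_range]
      have h2i : (2:ℝ) ^ (i - 1) * (1/32) ^ i = (1/2) * ((1:ℝ)/16) ^ i := by
        have hi' : i - 1 + 1 = i := by omega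
        have h16 : ((1:ℝ)/16) ^ i = 2 ^ i * (1/32) ^ i := by
          rw [← mul_pow]; norm_num
        have h2 : (2:ℝ) ^ i = 2 ^ (i - 1) * 2 := by
          rw [← pow_succ, hi']
        rw [h16, h2]; ring
      calc (2:ℝ) ^ (i - 1) * P i ≤ (2:ℝ) ^ (i - 1) * (1/32) ^ i :=
            mul_le_mul_of_nonneg_left hPle (by positivity)
        _ = (1/2) * ((1:ℝ)/16) ^ i := h2i
    have h2 : ∑ i ∈ Finset.Icc 1 s, (1/2) * ((1:ℝ)/16) ^ i
        = (1/2) * ((1/16) * ∑ j ∈ Finset.range s, ((1:ℝ)/16) ^ j) := by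
      rw [Finset.mul_sum, Finset.mul_sum]
      rw [← Finset.Ico_add_one_right_eq_Icc, Finset.sum_Ico_eq_sum_range]
      exact Finset.sum_congr rfl fun j _ => by rw [add_comm 1 j, pow_succ]; ring
    have h3 : ∑ j ∈ Finset.range s, ((1:ℝ)/16) ^ j < 16/15 := by
      rw [geom_sum_eq (by norm_num : ((1:ℝ)/16) ≠ 1)]
      rw [div_lt_iff_of_neg (by norm_num : ((1:ℝ)/16) - 1 < 0)]
      have : (0:ℝ) < (1/16) ^ s := by positivity
      nlinarith
    calc ∑ i ∈ Finset.Icc 1 s, (2:ℝ) ^ (i - 1) * P i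
        ≤ (1/2) * ((1/16) * ∑ j ∈ Finset.range s, ((1:ℝ)/16) ^ j) := by
          rw [← h2]; exact h1
      _ < 1/30 := by nlinarith
  constructor
  · exact hS1
  · nlinarith
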